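/- For the linearization D of a nonlinear connection on an affine bundle π : A → M, the nonlinear connection is recovered via D_U 𝕀 = κ(U) for every U ∈ 𝔛(A), where 𝕀 is the canonical section of π*A ⊂ π*Ã and κ the connector of the nonlinear connection. -/

import Mathlib

noncomputable section

/-- Total space of the (locally trivialized) affine bundle `π : A = ℝⁿ × ℝᵐ → M = ℝⁿ`,
with affine fibre coordinates `y`.  Its linear span `Ã` has fibre `ℝ × ℝᵐ` with the extra
coordinate `z⁰` (so `A = {z⁰ = 1}` and the model vector bundle is `V = {z⁰ = 0}`). -/
abbrev AA (n m : ℕ) := (Fin n → ℝ) × (Fin m → ℝ)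

/-- The linearization, restricted to `A`, of the homogeneous extension to `Ã − V` of the
nonlinear connection on `A` with coefficients `Γ` (so that `H_i = ∂/∂xⁱ − Γᴬᵢ ∂/∂yᴬ`);
it acts on sections `σ = (σ⁰, σᴬ)` of `π*Ã → A` by
`D_U σ = U(σ⁰) e₀ + {Uⁱ[H_i(σᴬ) + Γᴬᵢ₀ σ⁰ + ΓᴬᵢB σᴮ] + U^C V_C(σᴬ)} e_A`,
with `ΓᴬᵢB = ∂Γᴬᵢ/∂yᴮ` and `Γᴬᵢ₀ = Γᴬᵢ − yᴮ ΓᴬᵢB`. -/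
def Daff {n m : ℕ} (Γ : Fin n → AA n m → (Fin m → ℝ))
    (U : AA n m → AA n m) (σ : AA n m → ℝ × (Fin m → ℝ)) (p : AA n m) :
    ℝ × (Fin m → ℝ) :=
  fderiv ℝ σ p (U p) + ∑ i, (U p).1 i •
    ((0 : ℝ),
      (σ p).1 • (Γ i p - fderiv ℝ (fun u => Γ i (p.1, u)) p.2 p.2)
        + fderiv ℝ (fun u => Γ i (p.1, u)) p.2 (σ p).2)

/-- For the linearization `D` of a nonlinear connection on an affine bundle
`π : A → M`, the nonlinear connection is recovered via `D_U 𝕀 = κ(U)`, where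
`𝕀 = (1, y)` is the canonical section of `π*A ⊂ π*Ã` and `κ(U) = U_V + Σᵢ Uⁱ Γᵢ` is the
connector of the nonlinear connection (included in `π*Ã` as `(0, κ(U))`). -/
theorem affine_linearization_recovers_connector {n m : ℕ}
    (Γ : Fin n → AA n m → (Fin m → ℝ))
    (U : AA n m → AA n m) (p : AA n m) :
    Daff Γ U (fun q => ((1 : ℝ), q.2)) p
      = ((0 : ℝ), (U p).2 + ∑ i, (U p).1 i • Γ i p) := by
  have hd : fderiv ℝ (fun q : AA n m => ((1 : ℝ), q.2)) p (U p) = ((0:ℝ), (U p).2) := by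
    have h1 : HasFDerivAt (fun q : AA n m => ((1 : ℝ), q.2))
        ((ContinuousLinearMap.inr ℝ ℝ (Fin m → ℝ)).comp
          (ContinuousLinearMap.snd ℝ (Fin n → ℝ) (Fin m → ℝ))) p := by
      exact HasFDerivAt.prodMk (hasFDerivAt_const (1:ℝ) p) (hasFDerivAt_snd (𝕜 := ℝ) (p := p))
    rw [h1.fderiv]; rfl
  simp only [Daff, hd]
  have hterm : ∀ i : Fin n,
      (1:ℝ) • (Γ i p - fderiv ℝ (fun u => Γ i (p.1, u)) p.2 p.2)
        + fderiv ℝ (fun u => Γ i (p.1, u)) p.2 p.2 = Γ i p := by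
    intro i; simp
  simp only [hterm, Prod.ext_iff, Prod.fst_add, Prod.snd_add]
  constructor
  · simp [Prod.fst_sum]
  · simp [Prod.snd_sum]
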